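/- Suppose the recurrence coefficients b_1, …, b_k are integer constants, D > 0 is a root of multiplicity one of F(λ) = λ^k − b_1λ^{k−1} − ⋯ − b_k with |μ| < D for every other complex root μ, and the pointwise limit a(x) := lim_{n→∞} P_n(x)/D^n (which exists for every real x) satisfies a(1) > 0. Then a(x) is a polynomial, say a(x) = Σ_{j=0}^{κ} c_j x^j, and setting ω_j := c_j/a(1) one has ω_j ≥ 0, Σ_{j=0}^{κ} ω_j = 1, and for every j ∈ ℕ, lim_{n→∞} p_j(n)/P_n(1) = ω_j (with ω_j := 0 for j > κ); i.e., the limit of the laws of X_n is a discrete distribution. -/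

import Mathlib

open Polynomial Filter Set

theorem discrete_limit_of_constant_coefficients
    (k : ℕ) (hk : 1 ≤ k)
    (P : ℕ → Polynomial ℝ) (b : ℕ → ℤ)
    (hPcoeff : ∀ n i, ∃ m : ℕ, (P n).coeff i = (m : ℝ))
    (hPpos : ∀ n, 1 ≤ n → 0 < (P n).eval 1)
    (hrec : ∀ n, k < n → ∀ x : ℝ,
      (P n).eval x = ∑ j ∈ Finset.range k, (b (j + 1) : ℝ) * (P (n - (j + 1))).eval x)
    (D : ℝ) (hDpos : 0 < D)
    (Q : Polynomial ℂ)
    (hQ : Q = X ^ k - ∑ j ∈ Finset.range k, Polynomial.C ((b (j + 1) : ℂ)) * X ^ (k - (j + 1)))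
    (hroot : Q.eval (D : ℂ) = 0)
    (hmult : Q.rootMultiplicity (D : ℂ) = 1)
    (hdom : ∀ μ : ℂ, Q.eval μ = 0 → μ ≠ (D : ℂ) → ‖μ‖ < D)
    (a : ℝ → ℝ)
    (hlim : ∀ x : ℝ, Filter.Tendsto (fun n : ℕ => (P n).eval x / D ^ n)
      Filter.atTop (nhds (a x)))
    (hapos : 0 < a 1) :
    ∃ A : Polynomial ℝ,
      (∀ x : ℝ, a x = A.eval x) ∧
      (∀ j : ℕ, 0 ≤ A.coeff j / a 1) ∧
      (∑ j ∈ A.support, A.coeff j / a 1) = 1 ∧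
      ∀ j : ℕ, Filter.Tendsto (fun n : ℕ => (P n).coeff j / (P n).eval 1)
        Filter.atTop (nhds (A.coeff j / a 1)) := by
  classical
  -- nonnegativity of coefficients
  have hco : ∀ n i, 0 ≤ (P n).coeff i := by
    intro n i
    obtain ⟨m, hm⟩ := hPcoeff n i
    rw [hm]; positivity
  -- polynomial form of the recurrence
  have hrecP : ∀ n, k < n →
      P n = ∑ j ∈ Finset.range k, Polynomial.C ((b (j + 1) : ℝ)) * P (n - (j + 1)) := by
    intro n hn
    apply Polynomial.funext
    intro x
    rw [hrec n hn x]
    simp [Polynomial.eval_finset_sum]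
  -- degree bound
  set d := (Finset.range (k + 1)).sup (fun m => (P m).natDegree) with hd
  have hdeg : ∀ n, (P n).natDegree ≤ d := by
    intro n
    induction n using Nat.strong_induction_on with
    | _ n ih =>
      by_cases hn : k < n
      · rw [hrecP n hn]
        refine Polynomial.natDegree_sum_le_of_forall_le _ _ ?_
        intro j hj
        refine le_trans (Polynomial.natDegree_C_mul_le _ _) ?_
        exact ih (n - (j + 1)) (by omega)
      · exact Finset.le_sup (f := fun m => (P m).natDegree)
          (Finset.mem_range.mpr (by omega))
  set s := Finset.range (d + 1) with hs
  set v : ℕ → ℝ := fun i => (i : ℝ) with hv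
  have hinj : Set.InjOn v s := fun i _ j _ h => Nat.cast_injective h
  have hdlt : ∀ n, (P n).degree < (s.card : ℕ) := by
    intro n
    refine lt_of_le_of_lt (Polynomial.degree_le_natDegree) ?_
    rw [hs, Finset.card_range]
    exact_mod_cast Nat.lt_succ_of_le (hdeg n)
  have hPinterp : ∀ n,
      P n = ∑ i ∈ s, Polynomial.C ((P n).eval (v i)) * Lagrange.basis s v i := by
    intro n
    have h := Lagrange.eq_interpolate hinj (hdlt n)
    rw [Lagrange.interpolate_apply] at h
    exact h
  set A : Polynomial ℝ := Lagrange.interpolate s v (fun i => a (v i)) with hA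
  have hAsum : A = ∑ i ∈ s, Polynomial.C (a (v i)) * Lagrange.basis s v i := by
    rw [hA, Lagrange.interpolate_apply]
  -- degree bound on A
  have hAdeg : A.natDegree ≤ d := by
    by_cases h0 : A = 0
    · simp [h0]
    · have := Lagrange.degree_interpolate_lt (fun i => a (v i)) hinj
      rw [← hA, hs, Finset.card_range] at this
      have := (Polynomial.natDegree_lt_iff_degree_lt h0).mpr this
      omega
  -- coefficientwise convergence
  have hcoefflim : ∀ j, Tendsto (fun n : ℕ => (P n).coeff j / D ^ n)
      atTop (nhds (A.coeff j)) := by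
    intro j
    have hAc : A.coeff j = ∑ i ∈ s, a (v i) * (Lagrange.basis s v i).coeff j := by
      rw [hAsum, Polynomial.finset_sum_coeff]
      simp [Polynomial.coeff_C_mul]
    have heq : ∀ n : ℕ, (P n).coeff j / D ^ n
        = ∑ i ∈ s, ((P n).eval (v i) / D ^ n) * (Lagrange.basis s v i).coeff j := by
      intro n
      conv_lhs => rw [hPinterp n]
      rw [Polynomial.finset_sum_coeff, Finset.sum_div]
      refine Finset.sum_congr rfl fun i _ => ?_
      rw [Polynomial.coeff_C_mul]
      ring
    rw [hAc]
    simp only [heq]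
    exact tendsto_finset_sum _ fun i _ => (hlim (v i)).mul_const _
  -- a equals A everywhere
  have haA : ∀ x : ℝ, a x = A.eval x := by
    intro x
    have h1 : Tendsto (fun n : ℕ => (P n).eval x / D ^ n) atTop (nhds (A.eval x)) := by
      have heq : ∀ n : ℕ, (P n).eval x / D ^ n
          = ∑ i ∈ Finset.range (d + 1), ((P n).coeff i / D ^ n) * x ^ i := by
        intro n
        rw [Polynomial.eval_eq_sum_range' (Nat.lt_succ_of_le (hdeg n)), Finset.sum_div]
        refine Finset.sum_congr rfl fun i _ => ?_
        ring
      rw [Polynomial.eval_eq_sum_range' (Nat.lt_succ_of_le hAdeg)]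
      simp only [heq]
      exact tendsto_finset_sum _ fun i _ => (hcoefflim i).mul_const _
    exact tendsto_nhds_unique (hlim x) h1
  -- nonnegativity of coefficients of A
  have hAco : ∀ j, 0 ≤ A.coeff j := by
    intro j
    refine ge_of_tendsto' (hcoefflim j) fun n => ?_
    exact div_nonneg (hco n j) (le_of_lt (pow_pos hDpos n))
  have ha1 : a 1 ≠ 0 := ne_of_gt hapos
  refine ⟨A, haA, fun j => div_nonneg (hAco j) (le_of_lt hapos), ?_, ?_⟩
  · rw [← Finset.sum_div]
    have hev : ∑ j ∈ A.support, A.coeff j = A.eval 1 := by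
      rw [Polynomial.eval_eq_sum, Polynomial.sum]
      simp
    rw [hev, ← haA 1, div_self ha1]
  · intro j
    have h := (hcoefflim j).div (hlim 1) ha1
    refine h.congr fun n => ?_
    have hD : (D : ℝ) ^ n ≠ 0 := ne_of_gt (pow_pos hDpos n)
    by_cases hE : (P n).eval 1 = 0
    · simp [hE]
    · rw [Pi.div_apply]; field_simp
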